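/- arXiv:2408.13874 — 2 statements merged into one kernel-verified Lean document; each statement's English description precedes it below -/
import Mathlib

section
/- For all integers m ≥ 1 and n ≥ 0, the following identity holds in ℤ[q]: Σ_{k=0}^{n} (−q)^{n−k} · (Π_{j=0}^{k−1} [jm+2]_q) · h_{n−k}([1]_q, [m+1]_q, [2m+1]_q, …, [km+1]_q) = 1. (The k-th summand is (−q)^{n−k} times the lattice ordered q-Stirling number S^o[m,n,k].) -/
open Finset

/-- Complete homogeneous symmetric polynomial evaluated at a list of ring elements. -/
def hpoly {R : Type*} [CommSemiring R] : ℕ → List R → R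
  | 0, _ => 1
  | _ + 1, [] => 0
  | j + 1, a :: l => hpoly (j + 1) l + a * hpoly j (a :: l)
  termination_by j l => (j, l.length)

/-- The q-integer `[l]_q = 1 + q + … + q^{l-1}` in `ℤ[q]`. -/
noncomputable def qint (l : ℕ) : Polynomial ℤ := ∑ i ∈ range l, Polynomial.X ^ i

lemma hpoly_nil {R : Type*} [CommSemiring R] (j : ℕ) :
    hpoly j ([] : List R) = if j = 0 then 1 else 0 := by
  cases j with
  | zero => simp [hpoly]
  | succ j => simp [hpoly]

theorem hpoly_append {R : Type*} [CommSemiring R] :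
    ∀ (j : ℕ) (l : List R) (a : R),
      hpoly (j + 1) (l ++ [a]) = hpoly (j + 1) l + a * hpoly j (l ++ [a])
  | j, [], a => by simp [hpoly]
  | 0, b :: l, a => by
      simp only [List.cons_append, hpoly]
      rw [hpoly_append 0 l a]
      simp only [hpoly]
      ring
  | (j + 1), b :: l, a => by
      have IH2 := hpoly_append j (b :: l) a
      simp only [List.cons_append, hpoly] at IH2 ⊢
      rw [hpoly_append (j + 1) l a]
      conv_lhs => rw [IH2]
      ring
  termination_by j l => (j, l.length)

lemma key {R : Type*} [CommRing R] (s a : R) (l : List R) (c : ℕ) :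
    ∑ i ∈ range (c + 1), s ^ i * hpoly i l
      = s ^ c * hpoly c (l ++ [a])
        + (1 - s * a) * ∑ i ∈ range c, s ^ i * hpoly i (l ++ [a]) := by
  induction c with
  | zero => simp [hpoly]
  | succ c ih =>
      rw [Finset.sum_range_succ, ih, Finset.sum_range_succ (n := c), hpoly_append c l a]
      ring

lemma qint_succ (l : ℕ) : qint (l + 1) = 1 + Polynomial.X * qint l := by
  rw [qint, qint, Finset.sum_range_succ', Finset.mul_sum]
  simp [pow_succ, mul_comm, add_comm]

/-- in `ℤ[q]`,
`Σ_{k=0}^{n} (−q)^{n−k} · (Π_{j=0}^{k−1} [jm+2]_q) · h_{n−k}([1]_q, [m+1]_q, …, [km+1]_q) = 1`,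
i.e. the alternating sum of the lattice ordered q-Stirling numbers `S^o[m,n,k]` is `1`. -/
theorem stmt7 (m n : ℕ) (hm : 1 ≤ m) :
    ∑ k ∈ range (n + 1),
        (-(Polynomial.X : Polynomial ℤ)) ^ (n - k) *
          ((∏ j ∈ range k, qint (j * m + 2)) *
            hpoly (n - k) ((List.range (k + 1)).map fun j => qint (j * m + 1))) = 1 := by
  have h0 : ∀ k : ℕ, ((List.range (k + 1)).map fun j => qint (j * m + 1))
      = ((List.range k).map fun j => qint (j * m + 1)) ++ [qint (k * m + 1)] := by
    intro k
    simp [List.range_succ]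
  set G : ℕ → Polynomial ℤ := fun k =>
    (∏ j ∈ range k, qint (j * m + 2)) *
      ∑ i ∈ range (n + 1 - k), (-Polynomial.X) ^ i *
        hpoly i ((List.range k).map fun j => qint (j * m + 1)) with hG
  have hstep : ∀ k ∈ range (n + 1),
      (-(Polynomial.X : Polynomial ℤ)) ^ (n - k) *
        ((∏ j ∈ range k, qint (j * m + 2)) *
          hpoly (n - k) ((List.range (k + 1)).map fun j => qint (j * m + 1)))
        = G k - G (k + 1) := by
    intro k hk
    rw [mem_range, Nat.lt_succ_iff] at hk
    have hc1 : n + 1 - k = (n - k) + 1 := by omega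
    have hc2 : n + 1 - (k + 1) = n - k := by omega
    simp only [hG, hc1, hc2, h0, prod_range_succ]
    rw [key (-(Polynomial.X : Polynomial ℤ)) (qint (k * m + 1)) _ (n - k)]
    have hq : (1 : Polynomial ℤ) - (-Polynomial.X) * qint (k * m + 1) = qint (k * m + 2) := by
      have h := qint_succ (k * m + 1)
      rw [show k * m + 1 + 1 = k * m + 2 from rfl] at h
      rw [h]
      ring
    rw [hq]
    ring
  rw [Finset.sum_congr rfl hstep, Finset.sum_range_sub']
  simp [hG, hpoly_nil, Nat.sub_self]
end

section
/- For all integers m ≥ 1 and k ≥ 0, the following identity holds in the ring of formal power series ℚ[[X]]: Σ_{n≥0} h_{n−k}(1, m+1, 2m+1, …, km+1) · X^n/n! = (1/k!) · exp(X) · ((exp(mX) − 1)/m)^k, where h_j = 0 for j < 0, exp denotes the formal exponential series, and exp(mX) is obtained from exp(X) by rescaling X to mX. -/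
open Finset

lemma hpoly_zero {R : Type*} [CommSemiring R] (l : List R) : hpoly 0 l = 1 := by
  rw [hpoly]

lemma hpoly_succ_nil {R : Type*} [CommSemiring R] (j : ℕ) : hpoly (j+1) ([] : List R) = 0 := by
  rw [hpoly]

lemma hpoly_succ_cons {R : Type*} [CommSemiring R] (j : ℕ) (a : R) (l : List R) :
    hpoly (j+1) (a :: l) = hpoly (j+1) l + a * hpoly j (a :: l) := by
  rw [hpoly]

lemma hpoly_one_list {R : Type*} [CommSemiring R] : ∀ j, hpoly j [(1 : R)] = 1
  | 0 => hpoly_zero _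
  | j + 1 => by
      rw [hpoly_succ_cons, hpoly_succ_nil, hpoly_one_list j]; ring

lemma hpoly_snoc {R : Type*} [CommRing R] (a : R) :
    ∀ (j : ℕ) (l : List R), hpoly (j+1) (l ++ [a]) = hpoly (j+1) l + a * hpoly j (l ++ [a]) := by
  intro j
  induction j with
  | zero =>
      intro l
      induction l with
      | nil => simp [hpoly_succ_cons, hpoly_succ_nil, hpoly_zero]
      | cons b l ih =>
          simp only [List.cons_append, hpoly_succ_cons, hpoly_succ_nil, hpoly_zero] at ih ⊢
          rw [ih]; ring
  | succ j ihj =>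
      intro l
      induction l with
      | nil =>
          simp only [List.nil_append, hpoly_succ_cons, hpoly_succ_nil]
          try ring
      | cons b l ih =>
          rw [List.cons_append, hpoly_succ_cons, ih,
            hpoly_succ_cons (j+1) b l,
            hpoly_succ_cons j b (l ++ [a])]
          have h := ihj (b :: l)
          rw [List.cons_append, hpoly_succ_cons j b (l ++ [a])] at h
          linear_combination b * h

noncomputable section StirlingAux

open PowerSeries

/-- the evaluation list `[1, m+1, …, km+1]`. -/
def Lk (m k : ℕ) : List ℚ := (List.range (k + 1)).map fun j => ((j * m + 1 : ℕ) : ℚ)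

lemma Lk_succ (m k : ℕ) : Lk m (k + 1) = Lk m k ++ [(((k + 1) * m + 1 : ℕ) : ℚ)] := by
  simp [Lk, List.range_succ]

/-- The LHS series. -/
def Fser (m k : ℕ) : ℚ⟦X⟧ :=
  PowerSeries.mk fun n => if k ≤ n then hpoly (n - k) (Lk m k) / (n.factorial : ℚ) else 0

def Bser (m : ℕ) : ℚ⟦X⟧ :=
  PowerSeries.C (1 / (m : ℚ)) * (PowerSeries.rescale (m : ℚ) (PowerSeries.exp ℚ) - 1)

/-- The RHS series. -/
def Gser (m k : ℕ) : ℚ⟦X⟧ :=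
  PowerSeries.C (1 / (k.factorial : ℚ)) * PowerSeries.exp ℚ * Bser m ^ k

lemma guard_rec (m k n : ℕ) :
    (if k + 1 ≤ n + 1 then hpoly (n + 1 - (k + 1)) (Lk m (k + 1)) else 0)
      = (if k ≤ n then hpoly (n - k) (Lk m k) else 0)
        + (((k + 1) * m + 1 : ℕ) : ℚ) *
          (if k + 1 ≤ n then hpoly (n - (k + 1)) (Lk m (k + 1)) else 0) := by
  by_cases h1 : k + 1 ≤ n
  · have h2 : k ≤ n := by omega
    have h3 : k + 1 ≤ n + 1 := by omega
    have h4 : n + 1 - (k + 1) = (n - (k + 1)) + 1 := by omega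
    have h5 : n - k = (n - (k + 1)) + 1 := by omega
    rw [if_pos h1, if_pos h2, if_pos h3, h4, h5, Lk_succ, hpoly_snoc]
  · by_cases h2 : k ≤ n
    · have hn : n = k := by omega
      subst hn
      simp [hpoly_zero]
    · have h3 : ¬ (k + 1 ≤ n + 1) := by omega
      simp [h1, h2, h3]

lemma derivative_exp' : d⁄dX ℚ (PowerSeries.exp ℚ) = PowerSeries.exp ℚ := by
  ext n
  rw [PowerSeries.coeff_derivative, PowerSeries.coeff_exp, PowerSeries.coeff_exp]
  simp only [Algebra.algebraMap_self, RingHom.id_apply]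
  rw [Nat.factorial_succ]
  push_cast
  have : (n.factorial : ℚ) ≠ 0 := Nat.cast_ne_zero.2 n.factorial_ne_zero
  field_simp

lemma derivative_rescale_exp (a : ℚ) :
    d⁄dX ℚ (PowerSeries.rescale a (PowerSeries.exp ℚ)) =
      PowerSeries.C a * PowerSeries.rescale a (PowerSeries.exp ℚ) := by
  ext n
  rw [PowerSeries.coeff_derivative, PowerSeries.coeff_C_mul, PowerSeries.coeff_rescale,
    PowerSeries.coeff_rescale, PowerSeries.coeff_exp, PowerSeries.coeff_exp]
  simp only [Algebra.algebraMap_self, RingHom.id_apply]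
  rw [Nat.factorial_succ]
  push_cast
  have : (n.factorial : ℚ) ≠ 0 := Nat.cast_ne_zero.2 n.factorial_ne_zero
  field_simp
  ring

lemma ode_unique (a : ℚ) (H : ℚ⟦X⟧) (h1 : d⁄dX ℚ H = PowerSeries.C a * H)
    (h0 : PowerSeries.constantCoeff H = 0) : H = 0 := by
  ext n
  induction n using Nat.strong_induction_on with
  | _ n ih =>
    match n with
    | 0 => simpa [PowerSeries.coeff_zero_eq_constantCoeff] using h0
    | n + 1 =>
      have h2 := congrArg (PowerSeries.coeff n) h1
      rw [PowerSeries.coeff_derivative, PowerSeries.coeff_C_mul, ih n (by omega)] at h2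
      have : ((n : ℚ) + 1) ≠ 0 := by positivity
      simpa [this] using h2

lemma deriv_B (m : ℕ) (hm : 1 ≤ m) :
    d⁄dX ℚ (Bser m) = PowerSeries.C (m : ℚ) * Bser m + 1 := by
  have hm0 : (m : ℚ) ≠ 0 := by positivity
  unfold Bser
  rw [Derivation.leibniz]
  simp only [derivative_C, smul_eq_mul, mul_zero, add_zero, map_sub]
  rw [derivative_rescale_exp]
  simp only [Derivation.map_one_eq_zero, sub_zero]
  have hone : C (R := ℚ) (↑m : ℚ) * C (R := ℚ) (1 / ↑m) = 1 := by
    rw [← map_mul, mul_one_div_cancel hm0, map_one]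
  calc C (1 / (m:ℚ)) * (C ↑m * (rescale ↑m) (exp ℚ))
      = (C ↑m * C (1/(m:ℚ))) * (rescale ↑m) (exp ℚ) := by ring
    _ = (rescale (m:ℚ)) (exp ℚ) := by rw [hone, one_mul]
    _ = C ↑m * (C (1 / ↑m) * ((rescale ↑m) (exp ℚ) - 1)) + 1 := by
        rw [← mul_assoc, hone, one_mul]; ring

lemma deriv_F (m k : ℕ) :
    d⁄dX ℚ (Fser m (k+1))
      = Fser m k + PowerSeries.C ((((k+1) * m + 1 : ℕ)) : ℚ) * Fser m (k+1) := by
  ext n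
  rw [PowerSeries.coeff_derivative, map_add, PowerSeries.coeff_C_mul]
  unfold Fser
  simp only [PowerSeries.coeff_mk]
  have e1 : ∀ (P : Prop) [Decidable P] (x : ℚ) (c : ℚ),
      (if P then x / c else 0) = (if P then x else 0) / c := by
    intro P _ x c; split_ifs <;> simp
  rw [e1, e1, e1]
  have hfac : ((n+1).factorial : ℚ) = (n.factorial : ℚ) * ((n : ℚ) + 1) := by
    rw [Nat.factorial_succ]; push_cast; ring
  have hf0 : (n.factorial : ℚ) ≠ 0 := Nat.cast_ne_zero.2 n.factorial_ne_zero
  have hn1 : ((n : ℚ) + 1) ≠ 0 := by positivity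
  rw [guard_rec m k n, hfac]
  set g2 := (if k ≤ n then hpoly (n - k) (Lk m k) else 0) with hg2
  set g3 := (if k + 1 ≤ n then hpoly (n - (k + 1)) (Lk m (k + 1)) else 0) with hg3
  field_simp

lemma deriv_G (m k : ℕ) (hm : 1 ≤ m) :
    d⁄dX ℚ (Gser m (k+1))
      = Gser m k + PowerSeries.C ((((k+1) * m + 1 : ℕ)) : ℚ) * Gser m (k+1) := by
  have e1 : ((k+1 : ℕ) : ℚ⟦X⟧) * C (1/(((k+1).factorial : ℕ) : ℚ)) = C (1/(k.factorial : ℚ)) := by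
    rw [← map_natCast C (k+1), ← map_mul]
    congr 1
    have h1 : ((k.factorial : ℕ) : ℚ) ≠ 0 := Nat.cast_ne_zero.2 k.factorial_ne_zero
    have h2 : (((k+1).factorial : ℕ) : ℚ) ≠ 0 := Nat.cast_ne_zero.2 (k+1).factorial_ne_zero
    rw [Nat.factorial_succ]
    push_cast
    field_simp
  have e2 : C ((((k+1) * m + 1 : ℕ)) : ℚ)
      = ((k+1 : ℕ) : ℚ⟦X⟧) * C (m : ℚ) + 1 := by
    rw [← map_natCast C (k+1), ← map_mul,
      show ((((k+1) * m + 1 : ℕ)) : ℚ) = ((k+1 : ℕ) : ℚ) * (m : ℚ) + 1 by push_cast; ring,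
      map_add, map_one]
  unfold Gser
  rw [Derivation.leibniz, Derivation.leibniz, Derivation.leibniz_pow, derivative_C,
    derivative_exp', deriv_B m hm]
  simp only [smul_eq_mul, nsmul_eq_mul, Nat.add_sub_cancel, mul_zero, add_zero, Nat.cast_add,
    Nat.cast_one]
  push_cast at e1 e2 ⊢
  linear_combination (PowerSeries.exp ℚ * Bser m ^ k) * e1
    - (C (1/(((k+1).factorial : ℕ) : ℚ)) * PowerSeries.exp ℚ * Bser m ^ (k+1)) * e2

lemma FG (m k : ℕ) (hm : 1 ≤ m) : Fser m k = Gser m k := by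
  induction k with
  | zero =>
      ext n
      unfold Fser Gser Lk
      simp only [pow_zero, mul_one, Nat.factorial_zero, Nat.cast_one, ne_eq, one_ne_zero,
        not_false_eq_true, div_self, map_one, one_mul]
      rw [PowerSeries.coeff_mk, PowerSeries.coeff_exp]
      simp only [Nat.zero_le, if_true, Nat.sub_zero, Algebra.algebraMap_self, RingHom.id_apply]
      norm_num [List.range_succ]
      rw [hpoly_one_list]
      simp
  | succ k ih =>
      have hd : d⁄dX ℚ (Fser m (k+1) - Gser m (k+1))
          = PowerSeries.C ((((k+1) * m + 1 : ℕ)) : ℚ) * (Fser m (k+1) - Gser m (k+1)) := by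
        rw [map_sub, deriv_F, deriv_G m k hm, ih, mul_sub]
        ring
      have h0 : PowerSeries.constantCoeff (Fser m (k+1) - Gser m (k+1)) = 0 := by
        rw [map_sub]
        have hF : PowerSeries.constantCoeff (Fser m (k+1)) = 0 := by
          rw [← PowerSeries.coeff_zero_eq_constantCoeff_apply]
          unfold Fser
          rw [PowerSeries.coeff_mk]
          simp
        have hr : PowerSeries.constantCoeff ((PowerSeries.rescale (m:ℚ)) (PowerSeries.exp ℚ)) = 1 := by
          rw [← PowerSeries.coeff_zero_eq_constantCoeff_apply, PowerSeries.coeff_rescale]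
          simp [PowerSeries.coeff_zero_eq_constantCoeff_apply, PowerSeries.constantCoeff_exp]
        have hB0 : PowerSeries.constantCoeff (Bser m) = 0 := by
          unfold Bser
          simp [hr]
        have hG : PowerSeries.constantCoeff (Gser m (k+1)) = 0 := by
          unfold Gser
          simp [hB0]
        rw [hF, hG, sub_zero]
      have := ode_unique _ _ hd h0
      exact sub_eq_zero.mp this

/-- for `m ≥ 1` and `k ≥ 0`, in `ℚ[[X]]`,
`Σ_{n≥0} h_{n−k}(1, m+1, 2m+1, …, km+1) · X^n/n! = (1/k!) · e^X · ((e^{mX} − 1)/m)^k`,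
where `h_j = 0` for `j < 0` (hence the `if k ≤ n` guard) and `e^{mX}` is obtained from
`e^X` by rescaling `X` to `mX`. -/
theorem stmt13 (m k : ℕ) (hm : 1 ≤ m) :
    (PowerSeries.mk fun n =>
        (if k ≤ n then
          (hpoly (n - k) ((List.range (k + 1)).map fun j => ((j * m + 1 : ℕ) : ℚ))) /
            (n.factorial : ℚ)
        else 0))
      = PowerSeries.C (1 / (k.factorial : ℚ)) * PowerSeries.exp ℚ *
          (PowerSeries.C (1 / (m : ℚ)) *
            (PowerSeries.rescale (m : ℚ) (PowerSeries.exp ℚ) - 1)) ^ k := by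
  have h := FG m k hm
  unfold Fser Gser Bser Lk at h
  exact h

end StirlingAux
end
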